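/- Let K ⊂ ℝ^d be a simplex with diameter h_K and inscribed-ball diameter ρ_K such that h_K/ρ_K ≤ ϑ. Assume ‖∂w/∂x_i‖_{L²(K̂)} ≤ C_{p+1,d} ‖w‖_{L²(K̂)} holds for all scalar polynomials w of degree ≤ p+1 on the unit simplex K̂ and each i. Then for every v ∈ RTN_p(K): h_K ‖div v‖_{L²(K)} ≤ √(2d) · ϑ · C_{p+1,d} · ‖v‖_{L²(K)}. -/

import Mathlib

open MeasureTheory Real Finset

noncomputable section

/-- Divergence of a vector field on `ℝ^d` (Euclidean coordinates). -/
def pdivE (d : ℕ) (f : EuclideanSpace ℝ (Fin d) → EuclideanSpace ℝ (Fin d))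
    (x : EuclideanSpace ℝ (Fin d)) : ℝ :=
  ∑ i, fderiv ℝ f x (EuclideanSpace.single i 1) i

/-- The unit simplex `K̂` in `ℝ^d`. -/
def unitSimplexE (d : ℕ) : Set (EuclideanSpace ℝ (Fin d)) :=
  {x | (∀ i, 0 ≤ x i) ∧ ∑ i, x i ≤ 1}

namespace DivInvAux

open MvPolynomial

variable {d : ℕ}

lemma mv_hasFDerivAt (P : MvPolynomial (Fin d) ℝ) (x : EuclideanSpace ℝ (Fin d)) :
    HasFDerivAt (fun y : EuclideanSpace ℝ (Fin d) => MvPolynomial.eval (fun j => y j) P)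
      (∑ i, MvPolynomial.eval (fun j => x j) (MvPolynomial.pderiv i P) •
        (EuclideanSpace.proj i : EuclideanSpace ℝ (Fin d) →L[ℝ] ℝ)) x := by
  induction P using MvPolynomial.induction_on with
  | C a => simp only [eval_C, pderiv_C, map_zero, zero_smul, Finset.sum_const_zero]
           exact hasFDerivAt_const a x
  | add p q hp hq =>
      have := hp.add hq
      simp only [eval_add, map_add, add_smul, Finset.sum_add_distrib] at this ⊢
      exact this
  | mul_X p n hp =>
      have h2 : HasFDerivAt (fun y : EuclideanSpace ℝ (Fin d) => y n)
          (EuclideanSpace.proj n : EuclideanSpace ℝ (Fin d) →L[ℝ] ℝ) x := by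
        simpa [PiLp.proj_apply] using
          (EuclideanSpace.proj (𝕜 := ℝ) n : EuclideanSpace ℝ (Fin d) →L[ℝ] ℝ).hasFDerivAt (x := x)
      have h3 := hp.mul h2
      simp only [eval_mul, eval_X]
      refine h3.congr_fderiv ?_
      symm
      ext u
      simp only [ContinuousLinearMap.sum_apply, ContinuousLinearMap.smul_apply,
        ContinuousLinearMap.add_apply, pderiv_mul, pderiv_X, eval_add, eval_mul, eval_X,
        smul_eq_mul, PiLp.proj_apply, Finset.sum_add_distrib]
      simp only [Pi.single_apply, apply_ite (MvPolynomial.eval fun j => x j), map_one, map_zero,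
        add_mul, mul_ite, ite_mul, mul_one, one_mul, mul_zero, zero_mul,
        Finset.sum_add_distrib, Finset.sum_ite_eq, Finset.mem_univ, if_true]
      rw [add_comm, Finset.mul_sum]
      congr 1
      exact Finset.sum_congr rfl fun i _ => by ring

lemma mv_continuous (P : MvPolynomial (Fin d) ℝ) :
    Continuous (fun y : EuclideanSpace ℝ (Fin d) => MvPolynomial.eval (fun j => y j) P) := by
  have : Differentiable ℝ (fun y : EuclideanSpace ℝ (Fin d) =>
      MvPolynomial.eval (fun j => y j) P) := fun x => (mv_hasFDerivAt P x).differentiableAt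
  exact this.continuous

/-- the derivative of a polynomial vector field -/
def polyD (w : Fin d → MvPolynomial (Fin d) ℝ) (x : EuclideanSpace ℝ (Fin d)) :
    EuclideanSpace ℝ (Fin d) →L[ℝ] EuclideanSpace ℝ (Fin d) :=
  ((PiLp.continuousLinearEquiv 2 ℝ (fun _ : Fin d => ℝ)).symm :
      (Fin d → ℝ) →L[ℝ] EuclideanSpace ℝ (Fin d)).comp
    (ContinuousLinearMap.pi fun i => ∑ j, MvPolynomial.eval (fun k => x k)
      (MvPolynomial.pderiv j (w i)) • (EuclideanSpace.proj j :
        EuclideanSpace ℝ (Fin d) →L[ℝ] ℝ))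

lemma polyD_apply (w : Fin d → MvPolynomial (Fin d) ℝ) (x u : EuclideanSpace ℝ (Fin d))
    (i : Fin d) : (polyD w x u) i =
      ∑ j, MvPolynomial.eval (fun k => x k) (MvPolynomial.pderiv j (w i)) * u j := by
  simp [polyD, PiLp.proj_apply]

lemma polyVec_hasFDerivAt (w : Fin d → MvPolynomial (Fin d) ℝ)
    (v : EuclideanSpace ℝ (Fin d) → EuclideanSpace ℝ (Fin d))
    (hvw : ∀ x i, v x i = MvPolynomial.eval (fun j => x j) (w i))
    (x : EuclideanSpace ℝ (Fin d)) : HasFDerivAt v (polyD w x) x := by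
  have hv : v = fun x => (PiLp.continuousLinearEquiv 2 ℝ (fun _ : Fin d => ℝ)).symm
      (fun i => MvPolynomial.eval (fun j => x j) (w i)) := by
    funext y; ext i; exact hvw y i
  rw [hv, polyD]
  have hpi : HasFDerivAt (fun x : EuclideanSpace ℝ (Fin d) =>
      (fun i => MvPolynomial.eval (fun j => x j) (w i) : Fin d → ℝ))
      (ContinuousLinearMap.pi fun i => ∑ j, MvPolynomial.eval (fun k => x k)
        (MvPolynomial.pderiv j (w i)) • (EuclideanSpace.proj j :
          EuclideanSpace ℝ (Fin d) →L[ℝ] ℝ)) x := by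
    apply hasFDerivAt_pi''
    intro i
    rw [ContinuousLinearMap.proj_pi]
    exact mv_hasFDerivAt (w i) x
  exact (((PiLp.continuousLinearEquiv 2 ℝ (fun _ : Fin d => ℝ)).symm).hasFDerivAt).comp x hpi

lemma polyVec_pdivE (w : Fin d → MvPolynomial (Fin d) ℝ)
    (v : EuclideanSpace ℝ (Fin d) → EuclideanSpace ℝ (Fin d))
    (hvw : ∀ x i, v x i = MvPolynomial.eval (fun j => x j) (w i))
    (x : EuclideanSpace ℝ (Fin d)) :
    pdivE d v x = ∑ i, MvPolynomial.eval (fun j => x j) (MvPolynomial.pderiv i (w i)) := by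
  have hfd : fderiv ℝ v x = polyD w x := (polyVec_hasFDerivAt w v hvw x).fderiv
  rw [pdivE, hfd]
  refine Finset.sum_congr rfl fun i _ => ?_
  rw [polyD_apply]
  simp [EuclideanSpace.single_apply]

lemma trace_sum_eq (B : EuclideanSpace ℝ (Fin d) →ₗ[ℝ] EuclideanSpace ℝ (Fin d)) :
    LinearMap.trace ℝ _ B = ∑ i, (B (EuclideanSpace.single i 1)) i := by
  classical
  rw [LinearMap.trace_eq_matrix_trace ℝ (EuclideanSpace.basisFun (Fin d) ℝ).toBasis, Matrix.trace]
  refine Finset.sum_congr rfl fun i _ => ?_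
  rw [Matrix.diag_apply, LinearMap.toMatrix_apply]
  simp [OrthonormalBasis.coe_toBasis_repr_apply, OrthonormalBasis.coe_toBasis,
    EuclideanSpace.basisFun_apply, EuclideanSpace.basisFun_repr]

lemma conj_trace_sum (J : EuclideanSpace ℝ (Fin d) ≃L[ℝ] EuclideanSpace ℝ (Fin d))
    (A : EuclideanSpace ℝ (Fin d) →L[ℝ] EuclideanSpace ℝ (Fin d)) :
    ∑ j, (J.symm (A (J (EuclideanSpace.single j 1)))) j
      = ∑ i, (A (EuclideanSpace.single i 1)) i := by
  have h1 : ∑ j, (J.symm (A (J (EuclideanSpace.single j 1)))) j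
      = LinearMap.trace ℝ _ ((J.toLinearEquiv.symm.conj) (A : _ →ₗ[ℝ] _)) := by
    rw [trace_sum_eq]
    refine Finset.sum_congr rfl fun j _ => ?_
    simp [LinearEquiv.conj_apply]
  rw [h1, LinearMap.trace_conj', trace_sum_eq]
  rfl

lemma dist_le_simplex {x y : EuclideanSpace ℝ (Fin d)} (hx : x ∈ unitSimplexE d)
    (hy : y ∈ unitSimplexE d) : dist x y ≤ Real.sqrt 2 := by
  rw [EuclideanSpace.dist_eq]
  simp only [Real.dist_eq, sq_abs]
  apply Real.sqrt_le_sqrt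
  have h1 : ∑ i, (x i - y i) ^ 2 ≤ (∑ i, (x i) ^ 2) + ∑ i, (y i) ^ 2 := by
    rw [← Finset.sum_add_distrib]
    refine Finset.sum_le_sum fun i _ => ?_
    have := hx.1 i; have := hy.1 i
    nlinarith
  have h2 : ∑ i, (x i) ^ 2 ≤ 1 := by
    calc ∑ i, (x i) ^ 2 ≤ (∑ i, x i) ^ 2 :=
          Finset.sum_sq_le_sq_sum_of_nonneg fun i _ => hx.1 i
      _ ≤ 1 := by nlinarith [hx.2, Finset.sum_nonneg (fun i (_ : i ∈ Finset.univ) => hx.1 i)]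
  have h3 : ∑ i, (y i) ^ 2 ≤ 1 := by
    calc ∑ i, (y i) ^ 2 ≤ (∑ i, y i) ^ 2 :=
          Finset.sum_sq_le_sq_sum_of_nonneg fun i _ => hy.1 i
      _ ≤ 1 := by nlinarith [hy.2, Finset.sum_nonneg (fun i (_ : i ∈ Finset.univ) => hy.1 i)]
  linarith

lemma simplex_bounded : Bornology.IsBounded (unitSimplexE d) := by
  rw [Metric.isBounded_iff]
  exact ⟨Real.sqrt 2, fun x hx y hy => dist_le_simplex hx hy⟩

lemma simplex_closed : IsClosed (unitSimplexE d) := by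
  have : unitSimplexE d = (⋂ i, (fun x : EuclideanSpace ℝ (Fin d) => x i) ⁻¹' Set.Ici 0) ∩
      ((fun x : EuclideanSpace ℝ (Fin d) => ∑ i, x i) ⁻¹' Set.Iic 1) := by
    ext x; simp [unitSimplexE, Set.mem_iInter]
  rw [this]
  have hc : ∀ i : Fin d, Continuous (fun x : EuclideanSpace ℝ (Fin d) => x i) := by
    intro i
    exact (EuclideanSpace.proj (𝕜 := ℝ) i :
      EuclideanSpace ℝ (Fin d) →L[ℝ] ℝ).continuous
  exact (isClosed_iInter fun i => isClosed_Ici.preimage (hc i)).inter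
    (isClosed_Iic.preimage (continuous_finset_sum _ fun i _ => hc i))

lemma simplex_compact : IsCompact (unitSimplexE d) :=
  Metric.isCompact_of_isClosed_isBounded simplex_closed simplex_bounded

lemma simplex_measurable : MeasurableSet (unitSimplexE d) :=
  simplex_closed.measurableSet

lemma symm_opnorm_le (J : EuclideanSpace ℝ (Fin d) ≃L[ℝ] EuclideanSpace ℝ (Fin d))
    (c z : EuclideanSpace ℝ (Fin d)) {ρK : ℝ} (hρ : 0 < ρK)
    (hball : Metric.closedBall z (ρK / 2) ⊆ (fun xh => J xh + c) '' unitSimplexE d) :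
    ‖(J.symm : EuclideanSpace ℝ (Fin d) →L[ℝ] EuclideanSpace ℝ (Fin d))‖
      ≤ Real.sqrt 2 / ρK := by
  apply ContinuousLinearMap.opNorm_le_bound _ (by positivity)
  intro u
  simp only [ContinuousLinearEquiv.coe_coe]
  rcases eq_or_ne u 0 with rfl | hu
  · simp
  have hun : 0 < ‖u‖ := norm_pos_iff.mpr hu
  set w : EuclideanSpace ℝ (Fin d) := (ρK / (2 * ‖u‖)) • u with hw
  have hwn : ‖w‖ = ρK / 2 := by
    rw [hw, norm_smul, Real.norm_eq_abs, abs_of_pos (by positivity)]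
    field_simp
  have hp : z + w ∈ Metric.closedBall z (ρK / 2) := by
    simp [dist_self_add_left, hwn]
  have hm : z - w ∈ Metric.closedBall z (ρK / 2) := by
    simp [dist_self_sub_left, hwn]
  obtain ⟨a, ha, hae⟩ := hball hp
  obtain ⟨b, hb, hbe⟩ := hball hm
  have hae' : J a + c = z + w := hae
  have hbe' : J b + c = z - w := hbe
  have h1 : J (a - b) = (2 : ℝ) • w := by
    rw [map_sub]
    have h0 : J a - J b = (z + w) - (z - w) := by rw [← hae', ← hbe']; abel
    rw [h0]; module
  have hab : a - b = J.symm ((2 : ℝ) • w) := by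
    rw [← h1]; simp
  have hdist : ‖a - b‖ ≤ Real.sqrt 2 := by
    rw [← dist_eq_norm]
    exact dist_le_simplex ha hb
  have h2w : (2 : ℝ) • w = (ρK / ‖u‖) • u := by
    rw [hw, smul_smul]; congr 1; field_simp
  rw [hab, h2w, _root_.map_smul, norm_smul, Real.norm_eq_abs,
    abs_of_pos (by positivity : (0:ℝ) < ρK / ‖u‖)] at hdist
  have hd2 : ρK * ‖J.symm u‖ ≤ Real.sqrt 2 * ‖u‖ := by
    rw [div_mul_eq_mul_div, div_le_iff₀ hun] at hdist
    linarith
  rw [div_mul_eq_mul_div, le_div_iff₀ hρ]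
  linarith

lemma totalDegree_aeval_le_one (f : Fin d → MvPolynomial (Fin d) ℝ)
    (hf : ∀ l, (f l).totalDegree ≤ 1) (P : MvPolynomial (Fin d) ℝ) :
    (MvPolynomial.aeval f P).totalDegree ≤ P.totalDegree := by
  rw [aeval_def, eval₂_eq]
  apply totalDegree_finsetSum_le
  intro m hm
  calc (C (algebraMap ℝ ℝ (P.coeff m)) * ∏ i ∈ m.support, f i ^ m i).totalDegree
      ≤ (C (algebraMap ℝ ℝ (P.coeff m)) : MvPolynomial (Fin d) ℝ).totalDegree
        + (∏ i ∈ m.support, f i ^ m i).totalDegree := totalDegree_mul _ _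
    _ ≤ 0 + ∑ i ∈ m.support, (f i ^ m i).totalDegree := by
        refine add_le_add ?_ (totalDegree_finset_prod _ _)
        simp [totalDegree_C]
    _ ≤ ∑ i ∈ m.support, m i * 1 := by
        rw [zero_add]
        refine Finset.sum_le_sum fun i _ => ?_
        exact (totalDegree_pow _ _).trans (Nat.mul_le_mul_left _ (hf i))
    _ = m.sum fun _ e => e := by simp [Finsupp.sum]
    _ ≤ P.totalDegree := le_totalDegree hm

lemma eval_aeval' (f : Fin d → MvPolynomial (Fin d) ℝ) (P : MvPolynomial (Fin d) ℝ)
    (x : Fin d → ℝ) :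
    MvPolynomial.eval x (MvPolynomial.aeval f P)
      = MvPolynomial.eval (fun l => MvPolynomial.eval x (f l)) P := by
  rw [aeval_def, eval_eval₂]
  have h : (MvPolynomial.eval x).comp (algebraMap ℝ (MvPolynomial (Fin d) ℝ)) = RingHom.id ℝ := by
    ext r; simp
  rw [h, eval₂_id]

lemma clm_apply_eq_sum (φ : EuclideanSpace ℝ (Fin d) →L[ℝ] ℝ) (x : EuclideanSpace ℝ (Fin d)) :
    φ x = ∑ m, x m * φ (EuclideanSpace.single m 1) := by
  conv_lhs => rw [← OrthonormalBasis.sum_repr (EuclideanSpace.basisFun (Fin d) ℝ) x]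
  rw [map_sum]
  refine Finset.sum_congr rfl fun m _ => ?_
  rw [EuclideanSpace.basisFun_repr, EuclideanSpace.basisFun_apply, _root_.map_smul, smul_eq_mul]

lemma coord_apply_eq_sum (L : EuclideanSpace ℝ (Fin d) →L[ℝ] EuclideanSpace ℝ (Fin d))
    (x : EuclideanSpace ℝ (Fin d)) (l : Fin d) :
    (L x) l = ∑ m, x m * (L (EuclideanSpace.single m 1)) l := by
  have := clm_apply_eq_sum ((EuclideanSpace.proj l :
    EuclideanSpace ℝ (Fin d) →L[ℝ] ℝ).comp L) x
  simpa [PiLp.proj_apply] using this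

lemma cov_simplex (J : EuclideanSpace ℝ (Fin d) ≃L[ℝ] EuclideanSpace ℝ (Fin d))
    (c : EuclideanSpace ℝ (Fin d)) (g : EuclideanSpace ℝ (Fin d) → ℝ) :
    ∫ x in (fun xh => J xh + c) '' unitSimplexE d, g x
      = |LinearMap.det ((J : EuclideanSpace ℝ (Fin d) →L[ℝ] EuclideanSpace ℝ (Fin d))
          : EuclideanSpace ℝ (Fin d) →ₗ[ℝ] EuclideanSpace ℝ (Fin d))|
        * ∫ xh in unitSimplexE d, g (J xh + c) := by
  rw [show (fun xh : EuclideanSpace ℝ (Fin d) => J xh + c)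
      = (fun xh => (J : EuclideanSpace ℝ (Fin d) →L[ℝ] EuclideanSpace ℝ (Fin d)) xh + c)
    from rfl]
  rw [integral_image_eq_integral_abs_det_fderiv_smul volume simplex_measurable
    (f' := fun _ => (J : EuclideanSpace ℝ (Fin d) →L[ℝ] EuclideanSpace ℝ (Fin d)))
    (fun x _ => ((J : EuclideanSpace ℝ (Fin d) →L[ℝ]
        EuclideanSpace ℝ (Fin d)).hasFDerivAt.add_const c).hasFDerivWithinAt)
    (fun a _ b _ h => by
      simpa using J.injective (by simpa using congrArg (fun y => y - c) h))]
  rw [integral_smul]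
  rfl

end DivInvAux

set_option maxHeartbeats 1000000 in
/-- Inverse inequality for the divergence on a general simplex `K = T(K̂)` (`T` affine,
invertible) of diameter `h_K`, containing a ball of diameter `ρ_K` with `h_K/ρ_K ≤ ϑ`:
if the inverse inequality with constant `C` holds on the unit simplex for scalar polynomials
of total degree `≤ p+1`, then `h_K ‖div v‖_{L²(K)} ≤ √(2d) ϑ C ‖v‖_{L²(K)}` for every
`v ∈ RTN_p(K)`. -/
theorem divergence_inverse_inequality_simplex (d p : ℕ) (hd : 1 ≤ d)
    (J : EuclideanSpace ℝ (Fin d) ≃L[ℝ] EuclideanSpace ℝ (Fin d))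
    (c : EuclideanSpace ℝ (Fin d))
    (K : Set (EuclideanSpace ℝ (Fin d)))
    (hKdef : K = (fun xh => J xh + c) '' unitSimplexE d)
    (hK ρK ϑ C : ℝ) (hhK : Metric.diam K = hK) (hρ : 0 < ρK)
    (hball : ∃ z, Metric.closedBall z (ρK / 2) ⊆ K)
    (hratio : hK / ρK ≤ ϑ) (hC : 0 ≤ C)
    -- inverse inequality on the unit simplex for degree `≤ p+1` scalar polynomials
    (hinv : ∀ w : MvPolynomial (Fin d) ℝ, w.totalDegree ≤ p + 1 → ∀ i : Fin d,
      Real.sqrt (∫ x in unitSimplexE d,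
          (MvPolynomial.eval (fun j => x j) (MvPolynomial.pderiv i w)) ^ 2) ≤
        C * Real.sqrt (∫ x in unitSimplexE d, (MvPolynomial.eval (fun j => x j) w) ^ 2))
    (v : EuclideanSpace ℝ (Fin d) → EuclideanSpace ℝ (Fin d))
    -- `v ∈ RTN_p(K) = ℙ_p(K;ℝ^d) + ℙ_p(K)x`
    (hv : ∃ (P : Fin d → MvPolynomial (Fin d) ℝ) (q : MvPolynomial (Fin d) ℝ),
      (∀ i, (P i).totalDegree ≤ p) ∧ q.totalDegree ≤ p ∧
      ∀ x i, v x i = MvPolynomial.eval (fun j => x j) (P i) +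
        MvPolynomial.eval (fun j => x j) q * x i) :
    hK * Real.sqrt (∫ x in K, (pdivE d v x) ^ 2) ≤
      Real.sqrt (2 * d) * ϑ * C * Real.sqrt (∫ x in K, ‖v x‖ ^ 2) := by
  classical
  open MvPolynomial DivInvAux in
  obtain ⟨P, q, hP, hq, hvP⟩ := hv
  -- the component polynomials of `v`
  set poly : Fin d → MvPolynomial (Fin d) ℝ := fun k => P k + q * X k with hpoly
  have hvpoly : ∀ x i, v x i = MvPolynomial.eval (fun j => x j) (poly i) := by
    intro x i
    simp [hpoly, hvP x i]
  have hpolydeg : ∀ k, (poly k).totalDegree ≤ p + 1 := by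
    intro k
    refine (totalDegree_add _ _).trans (max_le ((hP k).trans (Nat.le_succ p)) ?_)
    refine (totalDegree_mul _ _).trans ?_
    have : (X k : MvPolynomial (Fin d) ℝ).totalDegree = 1 := totalDegree_X k
    omega

  -- the affine map coordinates as degree-1 polynomials
  set Apoly : Fin d → MvPolynomial (Fin d) ℝ := fun l =>
    MvPolynomial.C (c l) + ∑ m, MvPolynomial.C ((J (EuclideanSpace.single m 1)) l) * X m with hApoly
  have hA_eval : ∀ (xh : EuclideanSpace ℝ (Fin d)) (l : Fin d),
      MvPolynomial.eval (fun j => xh j) (Apoly l) = (J xh + c) l := by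
    intro xh l
    have hco : (J xh) l = ∑ m, xh m *
        ((J : EuclideanSpace ℝ (Fin d) →L[ℝ] EuclideanSpace ℝ (Fin d))
          (EuclideanSpace.single m 1)) l :=
      coord_apply_eq_sum (J : EuclideanSpace ℝ (Fin d) →L[ℝ] EuclideanSpace ℝ (Fin d)) xh l
    have hadd : (J xh + c) l = (J xh) l + c l := rfl
    rw [hadd, hco]
    simp only [hApoly, eval_add, eval_C, map_sum, eval_mul, eval_X,
      ContinuousLinearEquiv.coe_coe]
    rw [add_comm]
    congr 1
    exact Finset.sum_congr rfl fun m _ => by ring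
  have hAdeg : ∀ l, (Apoly l).totalDegree ≤ 1 := by
    intro l
    refine (totalDegree_add _ _).trans (max_le (by simp [totalDegree_C]) ?_)
    refine totalDegree_finsetSum_le fun m _ => ?_
    refine (totalDegree_mul _ _).trans ?_
    have h1 : (MvPolynomial.C ((J (EuclideanSpace.single m 1)) l) :
        MvPolynomial (Fin d) ℝ).totalDegree = 0 := totalDegree_C _
    have h2 : (X m : MvPolynomial (Fin d) ℝ).totalDegree ≤ 1 := (totalDegree_X m).le
    omega
  -- the transformed (Piola-type) component polynomials
  set what : Fin d → MvPolynomial (Fin d) ℝ := fun j =>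
    ∑ k, MvPolynomial.C ((J.symm (EuclideanSpace.single k 1)) j) * MvPolynomial.aeval Apoly (poly k)
    with hwhat
  have hwhatdeg : ∀ j, (what j).totalDegree ≤ p + 1 := by
    intro j
    refine totalDegree_finsetSum_le fun k _ => ?_
    refine (totalDegree_mul _ _).trans ?_
    have h1 : (MvPolynomial.C ((J.symm (EuclideanSpace.single k 1)) j) :
        MvPolynomial (Fin d) ℝ).totalDegree = 0 := totalDegree_C _
    have h2 := (totalDegree_aeval_le_one Apoly hAdeg (poly k)).trans (hpolydeg k)
    omega
  -- the transformed vector field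
  set F : EuclideanSpace ℝ (Fin d) → EuclideanSpace ℝ (Fin d) :=
    fun xh => J.symm (v (J xh + c)) with hFdef
  have hF : ∀ xh j, F xh j = MvPolynomial.eval (fun i => xh i) (what j) := by
    intro xh j
    have hsy : (F xh) j = ∑ k, (v (J xh + c)) k *
        ((J.symm : EuclideanSpace ℝ (Fin d) →L[ℝ] EuclideanSpace ℝ (Fin d))
          (EuclideanSpace.single k 1)) j :=
      coord_apply_eq_sum (J.symm : EuclideanSpace ℝ (Fin d) →L[ℝ] EuclideanSpace ℝ (Fin d))
        (v (J xh + c)) j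
    rw [hsy, hwhat]
    simp only [map_sum, eval_mul, eval_C, ContinuousLinearEquiv.coe_coe]
    refine Finset.sum_congr rfl fun k _ => ?_
    rw [eval_aeval']
    have hAe : (fun l => MvPolynomial.eval (fun i => xh i) (Apoly l))
        = fun l => (J xh + c) l := funext fun l => hA_eval xh l
    rw [hAe, ← hvpoly (J xh + c) k]
    ring
  -- divergence transforms by conjugation invariance of the trace
  have hdiveq : ∀ xh : EuclideanSpace ℝ (Fin d),
      pdivE d v (J xh + c)
        = ∑ j, MvPolynomial.eval (fun i => xh i) (MvPolynomial.pderiv j (what j)) := by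
    intro xh
    have hvd := polyVec_hasFDerivAt poly v hvpoly (J xh + c)
    have hT : HasFDerivAt (fun y : EuclideanSpace ℝ (Fin d) => J y + c)
        (J : EuclideanSpace ℝ (Fin d) →L[ℝ] EuclideanSpace ℝ (Fin d)) xh :=
      ((J : EuclideanSpace ℝ (Fin d) →L[ℝ]
        EuclideanSpace ℝ (Fin d)).hasFDerivAt).add_const c
    have hFd : HasFDerivAt F
        (((J.symm : EuclideanSpace ℝ (Fin d) →L[ℝ] EuclideanSpace ℝ (Fin d))).comp
          ((polyD poly (J xh + c)).comp
            (J : EuclideanSpace ℝ (Fin d) →L[ℝ] EuclideanSpace ℝ (Fin d)))) xh := by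
      have h1 := ((J.symm : EuclideanSpace ℝ (Fin d) →L[ℝ]
          EuclideanSpace ℝ (Fin d)).hasFDerivAt).comp xh (hvd.comp xh hT)
      exact h1
    have hD1 : pdivE d F xh
        = ∑ j, MvPolynomial.eval (fun i => xh i) (MvPolynomial.pderiv j (what j)) :=
      polyVec_pdivE what F hF xh
    have hD2 : pdivE d F xh = pdivE d v (J xh + c) := by
      rw [pdivE, pdivE, hFd.fderiv, hvd.fderiv]
      have := conj_trace_sum J (polyD poly (J xh + c))
      simpa [ContinuousLinearMap.comp_apply, ContinuousLinearEquiv.coe_coe] using this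
    rw [← hD1, hD2]
  -- continuity facts
  have hdiff_v : Differentiable ℝ v := fun x =>
    (polyVec_hasFDerivAt poly v hvpoly x).differentiableAt
  have hcont_v : Continuous v := hdiff_v.continuous
  have hcont_T : Continuous (fun xh : EuclideanSpace ℝ (Fin d) => J xh + c) :=
    J.continuous.add continuous_const
  -- change of variables
  set a : ℝ := |LinearMap.det ((J : EuclideanSpace ℝ (Fin d) →L[ℝ] EuclideanSpace ℝ (Fin d))
    : EuclideanSpace ℝ (Fin d) →ₗ[ℝ] EuclideanSpace ℝ (Fin d))| with hadef
  have ha0 : 0 ≤ a := abs_nonneg _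
  set I1 : ℝ := ∫ xh in unitSimplexE d, (pdivE d v (J xh + c)) ^ 2 with hI1def
  set I2 : ℝ := ∫ xh in unitSimplexE d, ‖v (J xh + c)‖ ^ 2 with hI2def
  have hAeq : ∫ x in K, (pdivE d v x) ^ 2 = a * I1 := by
    rw [hKdef]; exact cov_simplex J c _
  have hBeq : ∫ x in K, ‖v x‖ ^ 2 = a * I2 := by
    rw [hKdef]; exact cov_simplex J c _
  -- the scalar transformed divergence summands
  set g : Fin d → EuclideanSpace ℝ (Fin d) → ℝ :=
    fun j xh => MvPolynomial.eval (fun i => xh i) (MvPolynomial.pderiv j (what j)) with hgdef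
  set W : Fin d → EuclideanSpace ℝ (Fin d) → ℝ :=
    fun j xh => MvPolynomial.eval (fun i => xh i) (what j) with hWdef
  have hcont_g : ∀ j, Continuous (g j) := fun j => mv_continuous _
  have hcont_W : ∀ j, Continuous (W j) := fun j => mv_continuous _
  have int_of_cont : ∀ f : EuclideanSpace ℝ (Fin d) → ℝ, Continuous f →
      IntegrableOn f (unitSimplexE d) := fun f hf =>
    hf.continuousOn.integrableOn_compact simplex_compact
  -- step 2 : Cauchy-Schwarz on the sum
  have step2 : I1 ≤ (d : ℝ) * ∑ j, ∫ xh in unitSimplexE d, (g j xh) ^ 2 := by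
    have hIeq : I1 = ∫ xh in unitSimplexE d, (∑ j, g j xh) ^ 2 := by
      rw [hI1def]
      refine setIntegral_congr_fun simplex_measurable fun xh _ => ?_
      rw [hdiveq xh]
    rw [hIeq, ← integral_finset_sum _ (fun j _ => int_of_cont (fun xh => g j xh ^ 2) ((hcont_g j).pow 2)),
      ← MeasureTheory.integral_const_mul]
    refine setIntegral_mono_on
      (int_of_cont _ ((continuous_finset_sum _ fun j _ => hcont_g j).pow 2))
      (int_of_cont _ (continuous_const.mul
        (continuous_finset_sum _ fun j _ => (hcont_g j).pow 2)))
      simplex_measurable fun xh _ => ?_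
    have := sq_sum_le_card_mul_sum_sq (s := Finset.univ) (f := fun j => g j xh)
    simpa [Finset.card_univ] using this
  -- step 4 : the inverse inequality on the unit simplex, componentwise
  have step4 : ∀ j, (∫ xh in unitSimplexE d, (g j xh) ^ 2)
      ≤ C ^ 2 * ∫ xh in unitSimplexE d, (W j xh) ^ 2 := by
    intro j
    have h := hinv (what j) (hwhatdeg j) j
    have h1 : 0 ≤ ∫ xh in unitSimplexE d, (g j xh) ^ 2 :=
      setIntegral_nonneg simplex_measurable fun x _ => sq_nonneg _
    have h2 : 0 ≤ ∫ xh in unitSimplexE d, (W j xh) ^ 2 :=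
      setIntegral_nonneg simplex_measurable fun x _ => sq_nonneg _
    calc (∫ xh in unitSimplexE d, (g j xh) ^ 2)
        = (Real.sqrt (∫ xh in unitSimplexE d, (g j xh) ^ 2)) ^ 2 := (Real.sq_sqrt h1).symm
      _ ≤ (C * Real.sqrt (∫ xh in unitSimplexE d, (W j xh) ^ 2)) ^ 2 := by
          apply pow_le_pow_left₀ (Real.sqrt_nonneg _) _ 2
          exact h
      _ = C ^ 2 * ∫ xh in unitSimplexE d, (W j xh) ^ 2 := by
          rw [mul_pow, Real.sq_sqrt h2]
  -- step 5/6 : sum of squares of components is the norm squared; Piola bound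
  set NJ : ℝ := ‖(J.symm : EuclideanSpace ℝ (Fin d) →L[ℝ] EuclideanSpace ℝ (Fin d))‖ with hNJdef
  have hNJ0 : 0 ≤ NJ := norm_nonneg _
  have step56 : ∑ j, (∫ xh in unitSimplexE d, (W j xh) ^ 2) ≤ NJ ^ 2 * I2 := by
    rw [← integral_finset_sum _ (fun j _ => int_of_cont (fun xh => W j xh ^ 2) ((hcont_W j).pow 2)),
      ← MeasureTheory.integral_const_mul]
    refine setIntegral_mono_on
      (int_of_cont _ (continuous_finset_sum _ fun j _ => (hcont_W j).pow 2))
      (int_of_cont _ (continuous_const.mul (((hcont_v.comp hcont_T).norm).pow 2)))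
      simplex_measurable fun xh _ => ?_
    have hsum : ∑ j, (W j xh) ^ 2 = ‖F xh‖ ^ 2 := by
      rw [EuclideanSpace.norm_eq, Real.sq_sqrt (Finset.sum_nonneg fun j _ => sq_nonneg _)]
      refine (Finset.sum_congr rfl fun j _ => ?_).symm
      rw [Real.norm_eq_abs, sq_abs, hF xh j]
    rw [hsum]
    have hFle : ‖F xh‖ ≤ NJ * ‖v (J xh + c)‖ := by
      rw [hFdef]
      exact (J.symm : EuclideanSpace ℝ (Fin d) →L[ℝ]
        EuclideanSpace ℝ (Fin d)).le_opNorm (v (J xh + c))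
    calc ‖F xh‖ ^ 2 ≤ (NJ * ‖v (J xh + c)‖) ^ 2 :=
          pow_le_pow_left₀ (norm_nonneg _) hFle 2
      _ = NJ ^ 2 * ‖v (J xh + c)‖ ^ 2 := by ring
  -- combine the integral estimates
  have hI2nonneg : 0 ≤ I2 := setIntegral_nonneg simplex_measurable fun x _ => sq_nonneg _
  have hImain : I1 ≤ (d : ℝ) * C ^ 2 * NJ ^ 2 * I2 := by
    calc I1 ≤ (d : ℝ) * ∑ j, ∫ xh in unitSimplexE d, (g j xh) ^ 2 := step2
      _ ≤ (d : ℝ) * ∑ j, (C ^ 2 * ∫ xh in unitSimplexE d, (W j xh) ^ 2) := by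
          refine mul_le_mul_of_nonneg_left (Finset.sum_le_sum fun j _ => step4 j)
            (Nat.cast_nonneg d)
      _ = (d : ℝ) * C ^ 2 * ∑ j, (∫ xh in unitSimplexE d, (W j xh) ^ 2) := by
          rw [← Finset.mul_sum]; ring
      _ ≤ (d : ℝ) * C ^ 2 * (NJ ^ 2 * I2) := by
          refine mul_le_mul_of_nonneg_left step56 (by positivity)
      _ = (d : ℝ) * C ^ 2 * NJ ^ 2 * I2 := by ring
  -- geometric bound on the operator norm
  obtain ⟨z, hz⟩ := hball
  rw [hKdef] at hz
  have hNJle : NJ ≤ Real.sqrt 2 / ρK := symm_opnorm_le J c z hρ hz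
  have h0K : 0 ≤ hK := hhK ▸ Metric.diam_nonneg
  have hθ0 : 0 ≤ ϑ := le_trans (div_nonneg h0K hρ.le) hratio
  have hKNJ : hK * NJ ≤ Real.sqrt 2 * ϑ := by
    calc hK * NJ ≤ hK * (Real.sqrt 2 / ρK) := mul_le_mul_of_nonneg_left hNJle h0K
      _ = Real.sqrt 2 * (hK / ρK) := by ring
      _ ≤ Real.sqrt 2 * ϑ := mul_le_mul_of_nonneg_left hratio (Real.sqrt_nonneg 2)
  -- final assembly
  set A : ℝ := ∫ x in K, (pdivE d v x) ^ 2 with hAdef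
  set B : ℝ := ∫ x in K, ‖v x‖ ^ 2 with hBdef
  have hB0 : 0 ≤ B := by rw [hBeq]; exact mul_nonneg ha0 hI2nonneg
  have hA0 : 0 ≤ A := by
    rw [hAeq]
    exact mul_nonneg ha0 (setIntegral_nonneg simplex_measurable fun x _ => sq_nonneg _)
  have hABle : A ≤ (d : ℝ) * C ^ 2 * NJ ^ 2 * B := by
    rw [hAeq, hBeq]
    calc a * I1 ≤ a * ((d : ℝ) * C ^ 2 * NJ ^ 2 * I2) :=
          mul_le_mul_of_nonneg_left hImain ha0
      _ = (d : ℝ) * C ^ 2 * NJ ^ 2 * (a * I2) := by ring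
  have key : hK ^ 2 * A ≤ 2 * (d : ℝ) * (ϑ ^ 2 * (C ^ 2 * B)) := by
    have h1 : hK ^ 2 * A ≤ hK ^ 2 * ((d : ℝ) * C ^ 2 * NJ ^ 2 * B) :=
      mul_le_mul_of_nonneg_left hABle (sq_nonneg hK)
    have h2 : (hK * NJ) ^ 2 ≤ (Real.sqrt 2 * ϑ) ^ 2 :=
      pow_le_pow_left₀ (mul_nonneg h0K hNJ0) hKNJ 2
    have h3 : (Real.sqrt 2 * ϑ) ^ 2 = 2 * ϑ ^ 2 := by
      rw [mul_pow, Real.sq_sqrt (by norm_num : (0:ℝ) ≤ 2)]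
    have h4 : (d : ℝ) * C ^ 2 * B * (hK * NJ) ^ 2 ≤ (d : ℝ) * C ^ 2 * B * (2 * ϑ ^ 2) := by
      refine mul_le_mul_of_nonneg_left (h3 ▸ h2) (by positivity)
    nlinarith [h1, h4]
  have hLHS : hK * Real.sqrt A = Real.sqrt (hK ^ 2 * A) := by
    rw [Real.sqrt_mul (sq_nonneg hK), Real.sqrt_sq h0K]
  have hRHS : Real.sqrt (2 * d) * ϑ * C * Real.sqrt B
      = Real.sqrt (2 * (d : ℝ) * (ϑ ^ 2 * (C ^ 2 * B))) := by
    rw [Real.sqrt_mul (by positivity : (0:ℝ) ≤ 2 * d), Real.sqrt_mul (sq_nonneg ϑ),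
      Real.sqrt_mul (sq_nonneg C), Real.sqrt_sq hθ0, Real.sqrt_sq hC]
    ring
  rw [hLHS, hRHS]
  exact Real.sqrt_le_sqrt key

end
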